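/- arXiv:2508.19054 — 4 statements merged into one kernel-verified Lean document; each statement's English description precedes it below -/
import Mathlib

section
/- Under Condition 1, for every mode i ∈ 𝕄 the matrix 𝓡_i(P̲) − P̲ is positive semi-definite; that is, one application of the Riccati operator of any mode does not decrease the terminal cost matrix P̲ in the semi-definite order. -/
open Matrix Filter
open scoped ENNReal

/-- Data of a switched linear-quadratic problem with `M` modes,
state dimension `n` and continuous-input dimension `m`. -/
structure SwitchedLQR (n m M : ℕ) where
  A : Fin M → Matrix (Fin n) (Fin n) ℝ
  B : Fin M → Matrix (Fin n) (Fin m) ℝ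
  Q : Fin M → Matrix (Fin n) (Fin n) ℝ
  R : Fin M → Matrix (Fin m) (Fin m) ℝ

namespace SwitchedLQR

variable {n m M : ℕ}

/-- Stage cost `ℓ(x,u,i) = xᵀQᵢx + uᵀRᵢu`. -/
def ell (S : SwitchedLQR n m M) (x : Fin n → ℝ) (u : Fin m → ℝ) (i : Fin M) : ℝ :=
  x ⬝ᵥ ((S.Q i) *ᵥ x) + u ⬝ᵥ ((S.R i) *ᵥ u)

/-- Riccati operator `𝓡ᵢ(P)`. -/
noncomputable def Ric (S : SwitchedLQR n m M) (i : Fin M)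
    (P : Matrix (Fin n) (Fin n) ℝ) : Matrix (Fin n) (Fin n) ℝ :=
  S.Q i + (S.A i)ᵀ * P * S.A i -
    (S.A i)ᵀ * P * S.B i * (S.R i + (S.B i)ᵀ * P * S.B i)⁻¹ * ((S.B i)ᵀ * P * S.A i)

/-- `P_𝐢 = 𝓡_{i₀}(𝓡_{i₁}(⋯𝓡_{i_{d-1}}(P̲)⋯))` for a finite mode sequence `𝐢`. -/
noncomputable def Pseq (S : SwitchedLQR n m M) (Pund : Matrix (Fin n) (Fin n) ℝ)
    (l : List (Fin M)) : Matrix (Fin n) (Fin n) ℝ :=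
  l.foldr S.Ric Pund

/-- Solution `φ(k,x,u,i)` of the switched linear system. -/
def phi (S : SwitchedLQR n m M) (x : Fin n → ℝ) (u : ℕ → Fin m → ℝ) (is : ℕ → Fin M) :
    ℕ → Fin n → ℝ
  | 0 => x
  | k + 1 => S.A (is k) *ᵥ (phi S x u is k) + S.B (is k) *ᵥ (u k)

/-- Finite-horizon cost `J_d` with terminal cost matrix `P̲`. -/
noncomputable def Jd (S : SwitchedLQR n m M) (Pund : Matrix (Fin n) (Fin n) ℝ) (d : ℕ)
    (x : Fin n → ℝ) (u : ℕ → Fin m → ℝ) (is : ℕ → Fin M) : ℝ :=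
  (∑ k ∈ Finset.range d, S.ell (S.phi x u is k) (u k) (is k)) +
    (S.phi x u is d) ⬝ᵥ (Pund *ᵥ (S.phi x u is d))

/-- Infinite-horizon cost `J(x,u,i) ∈ [0,∞]`. -/
noncomputable def Jinf (S : SwitchedLQR n m M) (x : Fin n → ℝ) (u : ℕ → Fin m → ℝ)
    (is : ℕ → Fin M) : ℝ≥0∞ :=
  ∑' k : ℕ, ENNReal.ofReal (S.ell (S.phi x u is k) (u k) (is k))

/-- Optimal value function `V*(x)`. -/
noncomputable def Vstar (S : SwitchedLQR n m M) (x : Fin n → ℝ) : ℝ≥0∞ :=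
  ⨅ (u : ℕ → Fin m → ℝ) (is : ℕ → Fin M), S.Jinf x u is

/-- `V*_d(x)`: minimum over length-`d` mode sequences `𝐢` of `xᵀP_𝐢x`. -/
noncomputable def Vd (S : SwitchedLQR n m M) (Pund : Matrix (Fin n) (Fin n) ℝ) (d : ℕ)
    (x : Fin n → ℝ) : ℝ :=
  sInf {r : ℝ | ∃ l : List (Fin M), l.length = d ∧ r = x ⬝ᵥ ((S.Pseq Pund l) *ᵥ x)}

/-- Condition 1: the LMI block matrix is positive semi-definite for every mode. -/
def Cond1 (S : SwitchedLQR n m M) (Pund : Matrix (Fin n) (Fin n) ℝ) : Prop :=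
  ∀ i : Fin M,
    (Matrix.fromBlocks
      ((S.A i)ᵀ * Pund * S.A i - Pund + S.Q i) ((S.A i)ᵀ * Pund * S.B i)
      ((S.B i)ᵀ * Pund * S.A i) (S.R i + (S.B i)ᵀ * Pund * S.B i)).PosSemidef

/-- Assumption SA1. -/
def SA1 (S : SwitchedLQR n m M) (Pbar : Matrix (Fin n) (Fin n) ℝ) : Prop :=
  Pbar.PosDef ∧
    ∀ x : Fin n → ℝ, ∃ (u : ℕ → Fin m → ℝ) (is : ℕ → Fin M),
      S.Jinf x u is = S.Vstar x ∧ S.Vstar x ≤ ENNReal.ofReal (x ⬝ᵥ (Pbar *ᵥ x))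

/-- `H*_d(x)`. -/
noncomputable def HStar (S : SwitchedLQR n m M) (Pund : Matrix (Fin n) (Fin n) ℝ) (d : ℕ)
    (x : Fin n → ℝ) : Set ((Fin m → ℝ) × Fin M) :=
  {p | S.Vd Pund d x =
        S.ell x p.1 p.2 + S.Vd Pund (d - 1) (S.A p.2 *ᵥ x + S.B p.2 *ᵥ p.1)}

/-- `F_d(x)`. -/
noncomputable def Fd (S : SwitchedLQR n m M) (Pund : Matrix (Fin n) (Fin n) ℝ) (d : ℕ)
    (x : Fin n → ℝ) : Set (Fin n → ℝ) :=
  {y | ∃ p ∈ S.HStar Pund d x, y = S.A p.2 *ᵥ x + S.B p.2 *ᵥ p.1}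

end SwitchedLQR

/-- under Condition 1, for every mode `i`, `𝓡ᵢ(P̲) - P̲` is positive
semi-definite. -/
theorem stmt5 {n m M : ℕ} (hn : 0 < n) (hm : 0 < m) (hM : 0 < M)
    (S : SwitchedLQR n m M)
    (hQ : ∀ i : Fin M, (S.Q i).PosDef) (hR : ∀ i : Fin M, (S.R i).PosDef)
    (Pund : Matrix (Fin n) (Fin n) ℝ) (hPund : Pund.PosSemidef)
    (hC : S.Cond1 Pund) :
    ∀ i : Fin M, (S.Ric i Pund - Pund).PosSemidef := by
  intro i
  set A := S.A i
  set B := S.B i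
  set Q := S.Q i
  set R := S.R i
  set P := Pund
  have hC := hC i
  have hD : (R + Bᵀ * P * B).PosDef :=
    (hR i).add_posSemidef (hPund.mul_mul_conjTranspose_same Bᵀ)
  have : Invertible (R + Bᵀ * P * B) := hD.isUnit.invertible
  have hPt : Pᵀ = P := hPund.isHermitian
  have hBL : Bᵀ * P * A = (Aᵀ * P * B)ᴴ := by
    simp [conjTranspose_mul, Matrix.transpose_transpose, hPt, Matrix.mul_assoc]
  rw [hBL] at hC
  have h := (Matrix.PosDef.fromBlocks₂₂ _ _ hD).mp hC
  rw [← hBL] at h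
  show (Q + Aᵀ * P * A - Aᵀ * P * B * (R + Bᵀ * P * B)⁻¹ * (Bᵀ * P * A) - P).PosSemidef
  convert h using 1
  · rfl
  · abel
end

section
/- (Proposition 2, monotonicity under extension.) Under Condition 1, for every d ∈ ℕ, every x ∈ ℝⁿ, every length-d mode sequence 𝐢 and every j ∈ 𝕄, xᵀP_𝐢x ≤ xᵀP_{𝐢⊕j}x, where 𝐢⊕j denotes the length-(d+1) sequence obtained by appending j at the end of 𝐢. Equivalently, V°_d(x,𝐢) ≤ V°_{d+1}(x,𝐢⊕j). -/
open Matrix Filter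
open scoped ENNReal

section Aux

open Matrix

private lemma dpT {α β : Type*} [Fintype α] [Fintype β] (Mt : Matrix α β ℝ)
    (x : α → ℝ) (y : β → ℝ) : x ⬝ᵥ (Mt *ᵥ y) = (Mtᵀ *ᵥ x) ⬝ᵥ y := by
  rw [Matrix.dotProduct_mulVec, Matrix.mulVec_transpose]

private lemma quadT {α β : Type*} [Fintype α] [Fintype β]
    (K : Matrix β α ℝ) (N : Matrix β β ℝ) (x : α → ℝ) :
    x ⬝ᵥ ((Kᵀ * N * K) *ᵥ x) = (K *ᵥ x) ⬝ᵥ (N *ᵥ (K *ᵥ x)) := by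
  rw [Matrix.mul_assoc, ← Matrix.mulVec_mulVec, dpT, Matrix.transpose_transpose,
    ← Matrix.mulVec_mulVec]

private lemma tripleT {α β : Type*} [Fintype α] [Fintype β]
    (K : Matrix β α ℝ) (N : Matrix β β ℝ) (hN : Nᵀ = N) :
    (Kᵀ * N * K)ᵀ = Kᵀ * N * K := by
  rw [Matrix.transpose_mul, Matrix.transpose_mul, Matrix.transpose_transpose, hN,
    Matrix.mul_assoc]

namespace SwitchedLQR

variable {n m M : ℕ}

/-- auxiliary: `f(x,u) = xᵀQx + uᵀRu + (Ax+Bu)ᵀP(Ax+Bu)`. -/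
noncomputable def fval (S : SwitchedLQR n m M) (i : Fin M) (P : Matrix (Fin n) (Fin n) ℝ)
    (x : Fin n → ℝ) (u : Fin m → ℝ) : ℝ :=
  x ⬝ᵥ (S.Q i *ᵥ x) + u ⬝ᵥ (S.R i *ᵥ u) +
    (S.A i *ᵥ x + S.B i *ᵥ u) ⬝ᵥ (P *ᵥ (S.A i *ᵥ x + S.B i *ᵥ u))

private lemma cross (S : SwitchedLQR n m M) (i : Fin M) (P : Matrix (Fin n) (Fin n) ℝ)
    (x : Fin n → ℝ) (u : Fin m → ℝ) :
    (S.B i *ᵥ u) ⬝ᵥ (P *ᵥ (S.A i *ᵥ x)) = u ⬝ᵥ (((S.B i)ᵀ * P * S.A i) *ᵥ x) := by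
  have h := dpT (S.B i)ᵀ u (P *ᵥ (S.A i *ᵥ x))
  rw [Matrix.transpose_transpose] at h
  rw [← h, Matrix.mulVec_mulVec, Matrix.mulVec_mulVec, Matrix.mul_assoc]

private lemma cross' (S : SwitchedLQR n m M) (i : Fin M) {P : Matrix (Fin n) (Fin n) ℝ}
    (hPt : Pᵀ = P) (x : Fin n → ℝ) (u : Fin m → ℝ) :
    (S.A i *ᵥ x) ⬝ᵥ (P *ᵥ (S.B i *ᵥ u)) = u ⬝ᵥ (((S.B i)ᵀ * P * S.A i) *ᵥ x) := by
  rw [dpT P, hPt, dotProduct_comm, cross S i P]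

private lemma hKt (S : SwitchedLQR n m M) (i : Fin M) {P : Matrix (Fin n) (Fin n) ℝ}
    (hPt : Pᵀ = P) : (S.A i)ᵀ * P * S.B i = ((S.B i)ᵀ * P * S.A i)ᵀ := by
  rw [Matrix.transpose_mul, Matrix.transpose_mul, Matrix.transpose_transpose, hPt,
    Matrix.mul_assoc]

/-- Expansion of `fval`. -/
private lemma expand_f (S : SwitchedLQR n m M) (i : Fin M) {P : Matrix (Fin n) (Fin n) ℝ}
    (hPt : Pᵀ = P) (x : Fin n → ℝ) (u : Fin m → ℝ) :
    S.fval i P x u = x ⬝ᵥ (S.Q i *ᵥ x) + (S.A i *ᵥ x) ⬝ᵥ (P *ᵥ (S.A i *ᵥ x))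
      + u ⬝ᵥ ((S.R i + (S.B i)ᵀ * P * S.B i) *ᵥ u)
      + 2 * (u ⬝ᵥ (((S.B i)ᵀ * P * S.A i) *ᵥ x)) := by
  have hB := quadT (S.B i) P u
  simp only [fval, Matrix.mulVec_add, Matrix.add_mulVec, dotProduct_add, add_dotProduct,
    cross S i P x u, cross' S i hPt x u, hB]
  ring

private lemma vWv (S : SwitchedLQR n m M) (i : Fin M) {P : Matrix (Fin n) (Fin n) ℝ}
    (hWt : (S.R i + (S.B i)ᵀ * P * S.B i)ᵀ = S.R i + (S.B i)ᵀ * P * S.B i)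
    (hWdet : IsUnit (S.R i + (S.B i)ᵀ * P * S.B i).det)
    (x : Fin n → ℝ) (u : Fin m → ℝ) :
    (u + (S.R i + (S.B i)ᵀ * P * S.B i)⁻¹ *ᵥ (((S.B i)ᵀ * P * S.A i) *ᵥ x)) ⬝ᵥ
      ((S.R i + (S.B i)ᵀ * P * S.B i) *ᵥ
        (u + (S.R i + (S.B i)ᵀ * P * S.B i)⁻¹ *ᵥ (((S.B i)ᵀ * P * S.A i) *ᵥ x)))
      = u ⬝ᵥ ((S.R i + (S.B i)ᵀ * P * S.B i) *ᵥ u)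
        + 2 * (u ⬝ᵥ (((S.B i)ᵀ * P * S.A i) *ᵥ x))
        + (((S.B i)ᵀ * P * S.A i) *ᵥ x) ⬝ᵥ
            ((S.R i + (S.B i)ᵀ * P * S.B i)⁻¹ *ᵥ (((S.B i)ᵀ * P * S.A i) *ᵥ x)) := by
  set W := S.R i + (S.B i)ᵀ * P * S.B i with hW
  set c := ((S.B i)ᵀ * P * S.A i) *ᵥ x with hc
  have hWc : W *ᵥ (W⁻¹ *ᵥ c) = c := by
    rw [Matrix.mulVec_mulVec, Matrix.mul_nonsing_inv _ hWdet, Matrix.one_mulVec]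
  have t2 : (W⁻¹ *ᵥ c) ⬝ᵥ (W *ᵥ u) = u ⬝ᵥ c := by
    rw [dpT W, hWt, hWc, dotProduct_comm]
  have t3 : (W⁻¹ *ᵥ c) ⬝ᵥ c = c ⬝ᵥ (W⁻¹ *ᵥ c) := dotProduct_comm _ _
  simp only [Matrix.mulVec_add, dotProduct_add, add_dotProduct, hWc, t2, t3]
  ring

private lemma ric_form (S : SwitchedLQR n m M) (i : Fin M) {P : Matrix (Fin n) (Fin n) ℝ}
    (hPt : Pᵀ = P) (x : Fin n → ℝ) :
    x ⬝ᵥ (S.Ric i P *ᵥ x) = x ⬝ᵥ (S.Q i *ᵥ x) + (S.A i *ᵥ x) ⬝ᵥ (P *ᵥ (S.A i *ᵥ x))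
      - (((S.B i)ᵀ * P * S.A i) *ᵥ x) ⬝ᵥ
          ((S.R i + (S.B i)ᵀ * P * S.B i)⁻¹ *ᵥ (((S.B i)ᵀ * P * S.A i) *ᵥ x)) := by
  unfold Ric
  rw [Matrix.sub_mulVec, dotProduct_sub, Matrix.add_mulVec, dotProduct_add,
    quadT (S.A i) P x, hKt S i hPt, quadT]

/-- The fundamental completing-the-square identity. -/
private lemma key_id (S : SwitchedLQR n m M) (i : Fin M) {P : Matrix (Fin n) (Fin n) ℝ}
    (hPt : Pᵀ = P)
    (hWt : (S.R i + (S.B i)ᵀ * P * S.B i)ᵀ = S.R i + (S.B i)ᵀ * P * S.B i)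
    (hWdet : IsUnit (S.R i + (S.B i)ᵀ * P * S.B i).det)
    (x : Fin n → ℝ) (u : Fin m → ℝ) :
    S.fval i P x u = x ⬝ᵥ (S.Ric i P *ᵥ x) +
      (u + (S.R i + (S.B i)ᵀ * P * S.B i)⁻¹ *ᵥ (((S.B i)ᵀ * P * S.A i) *ᵥ x)) ⬝ᵥ
      ((S.R i + (S.B i)ᵀ * P * S.B i) *ᵥ
        (u + (S.R i + (S.B i)ᵀ * P * S.B i)⁻¹ *ᵥ (((S.B i)ᵀ * P * S.A i) *ᵥ x))) := by
  rw [expand_f S i hPt, vWv S i hWt hWdet, ric_form S i hPt]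
  ring

private lemma W_posdef (S : SwitchedLQR n m M) (i : Fin M) {P : Matrix (Fin n) (Fin n) ℝ}
    (hR : (S.R i).PosDef) (hP : P.PosSemidef) :
    (S.R i + (S.B i)ᵀ * P * S.B i).PosDef := by
  have h1 : ((S.B i)ᵀ * P * S.B i).PosSemidef := by
    have := hP.conjTranspose_mul_mul_same (S.B i)
    rwa [Matrix.conjTranspose_eq_transpose_of_trivial] at this
  exact hR.add_posSemidef h1

private lemma hPt' {k : ℕ} {P : Matrix (Fin k) (Fin k) ℝ} (hP : P.PosSemidef) : Pᵀ = P := by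
  have := hP.isHermitian
  rwa [Matrix.IsHermitian, Matrix.conjTranspose_eq_transpose_of_trivial] at this

private lemma hWt' (S : SwitchedLQR n m M) (i : Fin M) {P : Matrix (Fin n) (Fin n) ℝ}
    (hR : (S.R i).PosDef) (hP : P.PosSemidef) :
    (S.R i + (S.B i)ᵀ * P * S.B i)ᵀ = S.R i + (S.B i)ᵀ * P * S.B i :=
  hPt' (W_posdef S i hR hP).posSemidef

private lemma hWdet' (S : SwitchedLQR n m M) (i : Fin M) {P : Matrix (Fin n) (Fin n) ℝ}
    (hR : (S.R i).PosDef) (hP : P.PosSemidef) :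
    IsUnit (S.R i + (S.B i)ᵀ * P * S.B i).det :=
  (Matrix.isUnit_iff_isUnit_det _).1 (W_posdef S i hR hP).isUnit

private lemma psd_form {k : ℕ} {N : Matrix (Fin k) (Fin k) ℝ} (hN : N.PosSemidef)
    (z : Fin k → ℝ) : 0 ≤ z ⬝ᵥ (N *ᵥ z) := by
  have := hN.dotProduct_mulVec_nonneg z
  rwa [show star z = z from funext fun _ => star_trivial _] at this

/-- The Riccati form is a lower bound of `fval`. -/
private lemma ric_le_fval (S : SwitchedLQR n m M) (i : Fin M) {P : Matrix (Fin n) (Fin n) ℝ}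
    (hR : (S.R i).PosDef) (hP : P.PosSemidef) (x : Fin n → ℝ) (u : Fin m → ℝ) :
    x ⬝ᵥ (S.Ric i P *ᵥ x) ≤ S.fval i P x u := by
  rw [key_id S i (hPt' hP) (hWt' S i hR hP) (hWdet' S i hR hP) x u]
  have := psd_form ((W_posdef S i hR hP).posSemidef)
    (u + (S.R i + (S.B i)ᵀ * P * S.B i)⁻¹ *ᵥ (((S.B i)ᵀ * P * S.A i) *ᵥ x))
  linarith

/-- The Riccati form is attained by the optimal input. -/
private lemma ric_attained (S : SwitchedLQR n m M) (i : Fin M) {P : Matrix (Fin n) (Fin n) ℝ}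
    (hR : (S.R i).PosDef) (hP : P.PosSemidef) (x : Fin n → ℝ) :
    S.fval i P x (-((S.R i + (S.B i)ᵀ * P * S.B i)⁻¹ *ᵥ (((S.B i)ᵀ * P * S.A i) *ᵥ x)))
      = x ⬝ᵥ (S.Ric i P *ᵥ x) := by
  rw [key_id S i (hPt' hP) (hWt' S i hR hP) (hWdet' S i hR hP) x _, neg_add_cancel,
    Matrix.mulVec_zero, dotProduct_zero, add_zero]

/-- `Ric` preserves positive semidefiniteness. -/
private lemma ric_psd (S : SwitchedLQR n m M)
    (hQ : ∀ i : Fin M, (S.Q i).PosDef) (hR : ∀ i : Fin M, (S.R i).PosDef)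
    (i : Fin M) {P : Matrix (Fin n) (Fin n) ℝ} (hP : P.PosSemidef) :
    (S.Ric i P).PosSemidef := by
  have hpt := hPt' hP
  have hwt := hWt' S i (hR i) hP
  refine Matrix.PosSemidef.of_dotProduct_mulVec_nonneg ?_ ?_
  · rw [Matrix.IsHermitian, Matrix.conjTranspose_eq_transpose_of_trivial]
    have hQt : (S.Q i)ᵀ = S.Q i := hPt' (hQ i).posSemidef
    have hWinvT : ((S.R i + (S.B i)ᵀ * P * S.B i)⁻¹)ᵀ = (S.R i + (S.B i)ᵀ * P * S.B i)⁻¹ := by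
      rw [Matrix.transpose_nonsing_inv, hwt]
    unfold Ric
    rw [hKt S i hpt, Matrix.transpose_sub, Matrix.transpose_add, hQt,
      tripleT (S.A i) P hpt, tripleT _ _ hWinvT]
  · intro z
    rw [show star z = z from funext fun _ => star_trivial _]
    rw [← ric_attained S i (hR i) hP z]
    unfold fval
    have h1 := psd_form ((hQ i).posSemidef) z
    have h2 := psd_form ((hR i).posSemidef)
      (-((S.R i + (S.B i)ᵀ * P * S.B i)⁻¹ *ᵥ (((S.B i)ᵀ * P * S.A i) *ᵥ z)))
    have h3 := psd_form hP (S.A i *ᵥ z + S.B i *ᵥ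
      (-((S.R i + (S.B i)ᵀ * P * S.B i)⁻¹ *ᵥ (((S.B i)ᵀ * P * S.A i) *ᵥ z))))
    linarith

/-- monotonicity of `fval` in `P`. -/
private lemma fval_mono (S : SwitchedLQR n m M) {P P' : Matrix (Fin n) (Fin n) ℝ}
    (hle : ∀ z, z ⬝ᵥ (P *ᵥ z) ≤ z ⬝ᵥ (P' *ᵥ z)) (i : Fin M)
    (x : Fin n → ℝ) (u : Fin m → ℝ) : S.fval i P x u ≤ S.fval i P' x u := by
  unfold fval
  have := hle (S.A i *ᵥ x + S.B i *ᵥ u)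
  linarith

/-- monotonicity of `Ric` in `P` (quadratic-form order). -/
private lemma ric_mono (S : SwitchedLQR n m M) (hR : ∀ i : Fin M, (S.R i).PosDef)
    (i : Fin M) {P P' : Matrix (Fin n) (Fin n) ℝ}
    (hP : P.PosSemidef) (hP' : P'.PosSemidef)
    (hle : ∀ z, z ⬝ᵥ (P *ᵥ z) ≤ z ⬝ᵥ (P' *ᵥ z)) (x : Fin n → ℝ) :
    x ⬝ᵥ (S.Ric i P *ᵥ x) ≤ x ⬝ᵥ (S.Ric i P' *ᵥ x) := by
  calc x ⬝ᵥ (S.Ric i P *ᵥ x)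
      ≤ S.fval i P x (-((S.R i + (S.B i)ᵀ * P' * S.B i)⁻¹ *ᵥ (((S.B i)ᵀ * P' * S.A i) *ᵥ x))) :=
        ric_le_fval S i (hR i) hP x _
    _ ≤ S.fval i P' x (-((S.R i + (S.B i)ᵀ * P' * S.B i)⁻¹ *ᵥ (((S.B i)ᵀ * P' * S.A i) *ᵥ x))) :=
        fval_mono S hle i x _
    _ = x ⬝ᵥ (S.Ric i P' *ᵥ x) := ric_attained S i (hR i) hP' x

/-- monotonicity propagates through `foldr`. -/
private lemma foldr_mono (S : SwitchedLQR n m M)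
    (hQ : ∀ i : Fin M, (S.Q i).PosDef) (hR : ∀ i : Fin M, (S.R i).PosDef)
    (l : List (Fin M)) {P P' : Matrix (Fin n) (Fin n) ℝ}
    (hP : P.PosSemidef) (hP' : P'.PosSemidef)
    (hle : ∀ z, z ⬝ᵥ (P *ᵥ z) ≤ z ⬝ᵥ (P' *ᵥ z)) :
    (l.foldr S.Ric P).PosSemidef ∧ (l.foldr S.Ric P').PosSemidef ∧
      ∀ z, z ⬝ᵥ (l.foldr S.Ric P *ᵥ z) ≤ z ⬝ᵥ (l.foldr S.Ric P' *ᵥ z) := by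
  induction l with
  | nil => exact ⟨hP, hP', hle⟩
  | cons a l ih =>
    obtain ⟨h1, h2, h3⟩ := ih
    exact ⟨ric_psd S hQ hR a h1, ric_psd S hQ hR a h2, ric_mono S hR a h1 h2 h3⟩

end SwitchedLQR

end Aux

/-- Proposition 2, monotonicity under extension: under Condition 1,
for every `x`, every finite mode sequence `𝐢` and every mode `j`,
`xᵀP_𝐢x ≤ xᵀP_{𝐢⊕j}x`, i.e. `V°_d(x,𝐢) ≤ V°_{d+1}(x,𝐢⊕j)`. -/
theorem stmt6 {n m M : ℕ} (hn : 0 < n) (hm : 0 < m) (hM : 0 < M)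
    (S : SwitchedLQR n m M)
    (hQ : ∀ i : Fin M, (S.Q i).PosDef) (hR : ∀ i : Fin M, (S.R i).PosDef)
    (Pund : Matrix (Fin n) (Fin n) ℝ) (hPund : Pund.PosSemidef)
    (hC : S.Cond1 Pund) :
    ∀ (x : Fin n → ℝ) (l : List (Fin M)) (j : Fin M),
      x ⬝ᵥ ((S.Pseq Pund l) *ᵥ x) ≤ x ⬝ᵥ ((S.Pseq Pund (l ++ [j])) *ᵥ x) := by
  intro x l j
  have hpt : Pundᵀ = Pund := SwitchedLQR.hPt' hPund
  have hfold : S.Pseq Pund (l ++ [j]) = l.foldr S.Ric (S.Ric j Pund) := by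
    simp [SwitchedLQR.Pseq, List.foldr_append]
  have base : ∀ z, z ⬝ᵥ (Pund *ᵥ z) ≤ z ⬝ᵥ (S.Ric j Pund *ᵥ z) := by
    intro z
    have hle : ∀ u, z ⬝ᵥ (Pund *ᵥ z) ≤ S.fval j Pund z u := by
      intro u
      have h0 := (hC j).dotProduct_mulVec_nonneg (Sum.elim z u)
      rw [show star (Sum.elim z u) = Sum.elim z u from funext fun _ => star_trivial _,
        Matrix.fromBlocks_mulVec, sumElim_dotProduct_sumElim] at h0
      simp only [Sum.elim_comp_inl, Sum.elim_comp_inr, dotProduct_add,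
        Matrix.add_mulVec, Matrix.sub_mulVec, dotProduct_sub,
        quadT (S.A j) Pund z] at h0
      have hx : z ⬝ᵥ (((S.A j)ᵀ * Pund * S.B j) *ᵥ u)
          = u ⬝ᵥ (((S.B j)ᵀ * Pund * S.A j) *ᵥ z) := by
        rw [SwitchedLQR.hKt S j hpt, dpT, Matrix.transpose_transpose, dotProduct_comm]
      rw [hx] at h0
      rw [SwitchedLQR.expand_f S j hpt]
      simp only [Matrix.add_mulVec, dotProduct_add]
      linarith
    have h := hle (-((S.R j + (S.B j)ᵀ * Pund * S.B j)⁻¹ *ᵥ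
      (((S.B j)ᵀ * Pund * S.A j) *ᵥ z)))
    rwa [SwitchedLQR.ric_attained S j (hR j) hPund z] at h
  have hricpsd : (S.Ric j Pund).PosSemidef := SwitchedLQR.ric_psd S hQ hR j hPund
  have hmain := SwitchedLQR.foldr_mono S hQ hR l hPund hricpsd base
  rw [hfold]
  exact hmain.2.2 x
end

section
/- (Proposition 3, first part.) Under Condition 1, for every x ∈ ℝⁿ and d ∈ ℕ, the minimum V*_d(x) := min over all length-d mode sequences 𝐢 of xᵀP_𝐢x exists (it is attained by some length-d sequence 𝐢^{d,*}), and for every d̄ ≥ d and every length-d̄ mode sequence 𝐢, V*_d(x) ≤ xᵀP_𝐢x. In particular V*_d(x) ≤ V*_{d̄}(x) whenever d̄ ≥ d. -/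
open Matrix Filter
open scoped ENNReal

variable {n m : ℕ}

lemma psd_quad_nonneg {P : Matrix (Fin n) (Fin n) ℝ} (hP : P.PosSemidef) (x : Fin n → ℝ) :
    0 ≤ x ⬝ᵥ (P *ᵥ x) := by simpa using hP.dotProduct_mulVec_nonneg x

lemma dot_swap {ι κ : Type*} [Fintype ι] [Fintype κ] (Mat : Matrix ι κ ℝ) (a : ι → ℝ) (b : κ → ℝ) :
    a ⬝ᵥ (Mat *ᵥ b) = (Matᵀ *ᵥ a) ⬝ᵥ b := by
  rw [Matrix.mulVec_transpose, Matrix.dotProduct_mulVec]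

section key
variable (A : Matrix (Fin n) (Fin n) ℝ) (B : Matrix (Fin n) (Fin m) ℝ)
  (Q : Matrix (Fin n) (Fin n) ℝ) (R : Matrix (Fin m) (Fin m) ℝ)

lemma lam_posdef (hR : R.PosDef) {P : Matrix (Fin n) (Fin n) ℝ} (hP : P.PosSemidef) :
    (R + Bᵀ * P * B).PosDef := by
  have h1 : (Bᵀ * P * B).PosSemidef := by
    have := hP.conjTranspose_mul_mul_same B
    simpa [Matrix.conjTranspose_eq_transpose_of_trivial] using this
  exact hR.add_posSemidef h1

lemma key_identity (hR : R.PosDef) {P : Matrix (Fin n) (Fin n) ℝ} (hP : P.PosSemidef)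
    (x : Fin n → ℝ) (u : Fin m → ℝ) :
    x ⬝ᵥ ((Q + Aᵀ * P * A - Aᵀ * P * B * (R + Bᵀ * P * B)⁻¹ * (Bᵀ * P * A)) *ᵥ x)
      + (u + (R + Bᵀ * P * B)⁻¹ *ᵥ ((Bᵀ * P * A) *ᵥ x)) ⬝ᵥ
          ((R + Bᵀ * P * B) *ᵥ (u + (R + Bᵀ * P * B)⁻¹ *ᵥ ((Bᵀ * P * A) *ᵥ x)))
    = x ⬝ᵥ (Q *ᵥ x) + u ⬝ᵥ (R *ᵥ u)
      + (A *ᵥ x + B *ᵥ u) ⬝ᵥ (P *ᵥ (A *ᵥ x + B *ᵥ u)) := by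
  set Λ := R + Bᵀ * P * B with hΛdef
  have hΛ : Λ.PosDef := lam_posdef B R hR hP
  have hPsym : Pᵀ = P := by
    have := hP.isHermitian
    simpa [Matrix.IsHermitian, Matrix.conjTranspose_eq_transpose_of_trivial] using this
  have hΛsym : Λᵀ = Λ := by
    have := hΛ.isHermitian
    simpa [Matrix.IsHermitian, Matrix.conjTranspose_eq_transpose_of_trivial] using this
  have hΛisym : (Λ⁻¹)ᵀ = Λ⁻¹ := by
    have := hΛ.inv.isHermitian
    simpa [Matrix.IsHermitian, Matrix.conjTranspose_eq_transpose_of_trivial] using this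
  have hΛinv : Λ * Λ⁻¹ = 1 := Matrix.mul_nonsing_inv Λ hΛ.det_pos.ne'.isUnit
  set g := (Bᵀ * P * A) *ᵥ x with hg
  set w := Λ⁻¹ *ᵥ g with hw
  have hΛw : Λ *ᵥ w = g := by
    rw [hw, Matrix.mulVec_mulVec, hΛinv, Matrix.one_mulVec]
  -- first term of LHS
  have t1 : x ⬝ᵥ ((Q + Aᵀ * P * A - Aᵀ * P * B * Λ⁻¹ * (Bᵀ * P * A)) *ᵥ x)
      = x ⬝ᵥ (Q *ᵥ x) + x ⬝ᵥ ((Aᵀ * P * A) *ᵥ x) - w ⬝ᵥ g := by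
    rw [Matrix.sub_mulVec, Matrix.add_mulVec, dotProduct_sub, dotProduct_add]
    congr 1
    have : (Aᵀ * P * B * Λ⁻¹ * (Bᵀ * P * A)) *ᵥ x = (Aᵀ * P * B * Λ⁻¹) *ᵥ g := by
      rw [hg, Matrix.mulVec_mulVec]
    rw [this, dot_swap]
    congr 1
    have : (Aᵀ * P * B * Λ⁻¹)ᵀ = Λ⁻¹ * (Bᵀ * P * A) := by
      simp [Matrix.transpose_mul, hΛisym, hPsym, Matrix.mul_assoc]
    rw [this, ← Matrix.mulVec_mulVec, ← hg, ← hw]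
  -- second term of LHS
  have t2 : (u + w) ⬝ᵥ (Λ *ᵥ (u + w))
      = u ⬝ᵥ (Λ *ᵥ u) + u ⬝ᵥ g + g ⬝ᵥ u + w ⬝ᵥ g := by
    rw [Matrix.mulVec_add, dotProduct_add, add_dotProduct, add_dotProduct, hΛw]
    have h2 : w ⬝ᵥ (Λ *ᵥ u) = g ⬝ᵥ u := by
      rw [dot_swap, hΛsym, hΛw]
    rw [h2]; ring
  -- RHS expansion
  have e1 : x ⬝ᵥ ((Aᵀ * P * A) *ᵥ x) = (A *ᵥ x) ⬝ᵥ (P *ᵥ (A *ᵥ x)) := by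
    rw [← Matrix.mulVec_mulVec, ← Matrix.mulVec_mulVec, dot_swap, Matrix.transpose_transpose]
  have e2 : (A *ᵥ x) ⬝ᵥ (P *ᵥ (B *ᵥ u)) = u ⬝ᵥ g := by
    rw [Matrix.mulVec_mulVec, dot_swap, Matrix.transpose_mul, hPsym, dotProduct_comm,
      Matrix.mulVec_mulVec]
  have e3 : (B *ᵥ u) ⬝ᵥ (P *ᵥ (A *ᵥ x)) = g ⬝ᵥ u := by
    rw [dotProduct_comm, dot_swap, Matrix.mulVec_mulVec, Matrix.mulVec_mulVec]
  have e4 : (B *ᵥ u) ⬝ᵥ (P *ᵥ (B *ᵥ u)) = u ⬝ᵥ ((Bᵀ * P * B) *ᵥ u) := by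
    rw [Matrix.mulVec_mulVec, dot_swap, Matrix.transpose_mul, hPsym, dotProduct_comm,
      Matrix.mulVec_mulVec]
  have e5 : u ⬝ᵥ (Λ *ᵥ u) = u ⬝ᵥ (R *ᵥ u) + u ⬝ᵥ ((Bᵀ * P * B) *ᵥ u) := by
    rw [hΛdef, Matrix.add_mulVec, dotProduct_add]
  calc x ⬝ᵥ ((Q + Aᵀ * P * A - Aᵀ * P * B * Λ⁻¹ * (Bᵀ * P * A)) *ᵥ x) + (u + w) ⬝ᵥ (Λ *ᵥ (u + w))
      = x ⬝ᵥ (Q *ᵥ x) + x ⬝ᵥ ((Aᵀ * P * A) *ᵥ x) + u ⬝ᵥ (Λ *ᵥ u) + u ⬝ᵥ g + g ⬝ᵥ u := by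
        rw [t1, t2]; ring
    _ = x ⬝ᵥ (Q *ᵥ x) + u ⬝ᵥ (R *ᵥ u)
        + (A *ᵥ x + B *ᵥ u) ⬝ᵥ (P *ᵥ (A *ᵥ x + B *ᵥ u)) := by
        rw [Matrix.mulVec_add, dotProduct_add, add_dotProduct, add_dotProduct,
          e1, e2, e3, e4, e5]
        ring
end key

lemma quad_expand (A : Matrix (Fin n) (Fin n) ℝ) (B : Matrix (Fin n) (Fin m) ℝ)
    {P : Matrix (Fin n) (Fin n) ℝ} (hPsym : Pᵀ = P) (x : Fin n → ℝ) (u : Fin m → ℝ) :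
    (A *ᵥ x + B *ᵥ u) ⬝ᵥ (P *ᵥ (A *ᵥ x + B *ᵥ u))
      = x ⬝ᵥ ((Aᵀ * P * A) *ᵥ x) + 2 * (u ⬝ᵥ ((Bᵀ * P * A) *ᵥ x))
        + u ⬝ᵥ ((Bᵀ * P * B) *ᵥ u) := by
  have e1 : x ⬝ᵥ ((Aᵀ * P * A) *ᵥ x) = (A *ᵥ x) ⬝ᵥ (P *ᵥ (A *ᵥ x)) := by
    rw [← Matrix.mulVec_mulVec, ← Matrix.mulVec_mulVec, dot_swap, Matrix.transpose_transpose]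
  have e2 : (A *ᵥ x) ⬝ᵥ (P *ᵥ (B *ᵥ u)) = u ⬝ᵥ ((Bᵀ * P * A) *ᵥ x) := by
    rw [Matrix.mulVec_mulVec, dot_swap, Matrix.transpose_mul, hPsym, dotProduct_comm,
      Matrix.mulVec_mulVec]
  have e3 : (B *ᵥ u) ⬝ᵥ (P *ᵥ (A *ᵥ x)) = ((Bᵀ * P * A) *ᵥ x) ⬝ᵥ u := by
    rw [dotProduct_comm, dot_swap, Matrix.mulVec_mulVec, Matrix.mulVec_mulVec]
  have e4 : (B *ᵥ u) ⬝ᵥ (P *ᵥ (B *ᵥ u)) = u ⬝ᵥ ((Bᵀ * P * B) *ᵥ u) := by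
    rw [Matrix.mulVec_mulVec, dot_swap, Matrix.transpose_mul, hPsym, dotProduct_comm,
      Matrix.mulVec_mulVec]
  rw [Matrix.mulVec_add, dotProduct_add, add_dotProduct, add_dotProduct, ← e1, e2, e3, e4,
    dotProduct_comm ((Bᵀ * P * A) *ᵥ x) u]
  ring

section ric
variable (A : Matrix (Fin n) (Fin n) ℝ) (B : Matrix (Fin n) (Fin m) ℝ)
  (Q : Matrix (Fin n) (Fin n) ℝ) (R : Matrix (Fin m) (Fin m) ℝ)

lemma ric_cost_le (hR : R.PosDef) {P : Matrix (Fin n) (Fin n) ℝ} (hP : P.PosSemidef)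
    (x : Fin n → ℝ) (u : Fin m → ℝ) :
    x ⬝ᵥ ((Q + Aᵀ * P * A - Aᵀ * P * B * (R + Bᵀ * P * B)⁻¹ * (Bᵀ * P * A)) *ᵥ x)
      ≤ x ⬝ᵥ (Q *ᵥ x) + u ⬝ᵥ (R *ᵥ u)
        + (A *ᵥ x + B *ᵥ u) ⬝ᵥ (P *ᵥ (A *ᵥ x + B *ᵥ u)) := by
  have k := key_identity A B Q R hR hP x u
  have h0 := psd_quad_nonneg (lam_posdef B R hR hP).posSemidef
    (u + (R + Bᵀ * P * B)⁻¹ *ᵥ ((Bᵀ * P * A) *ᵥ x))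
  linarith

lemma ric_cost_eq (hR : R.PosDef) {P : Matrix (Fin n) (Fin n) ℝ} (hP : P.PosSemidef)
    (x : Fin n → ℝ) :
    ∃ u : Fin m → ℝ,
      x ⬝ᵥ ((Q + Aᵀ * P * A - Aᵀ * P * B * (R + Bᵀ * P * B)⁻¹ * (Bᵀ * P * A)) *ᵥ x)
        = x ⬝ᵥ (Q *ᵥ x) + u ⬝ᵥ (R *ᵥ u)
          + (A *ᵥ x + B *ᵥ u) ⬝ᵥ (P *ᵥ (A *ᵥ x + B *ᵥ u)) := by
  refine ⟨-((R + Bᵀ * P * B)⁻¹ *ᵥ ((Bᵀ * P * A) *ᵥ x)), ?_⟩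
  have k := key_identity A B Q R hR hP x (-((R + Bᵀ * P * B)⁻¹ *ᵥ ((Bᵀ * P * A) *ᵥ x)))
  simpa using k

lemma ric_mono (hR : R.PosDef) {P P' : Matrix (Fin n) (Fin n) ℝ}
    (hP : P.PosSemidef) (hP' : P'.PosSemidef)
    (hle : ∀ y, y ⬝ᵥ (P *ᵥ y) ≤ y ⬝ᵥ (P' *ᵥ y)) (x : Fin n → ℝ) :
    x ⬝ᵥ ((Q + Aᵀ * P * A - Aᵀ * P * B * (R + Bᵀ * P * B)⁻¹ * (Bᵀ * P * A)) *ᵥ x)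
      ≤ x ⬝ᵥ ((Q + Aᵀ * P' * A - Aᵀ * P' * B * (R + Bᵀ * P' * B)⁻¹ * (Bᵀ * P' * A)) *ᵥ x) := by
  obtain ⟨u, hu⟩ := ric_cost_eq A B Q R hR hP' x
  have h1 := ric_cost_le A B Q R hR hP x u
  have h2 := hle (A *ᵥ x + B *ᵥ u)
  linarith

lemma ric_psd (hQ : Q.PosSemidef) (hR : R.PosDef) {P : Matrix (Fin n) (Fin n) ℝ}
    (hP : P.PosSemidef) :
    (Q + Aᵀ * P * A - Aᵀ * P * B * (R + Bᵀ * P * B)⁻¹ * (Bᵀ * P * A)).PosSemidef := by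
  have hPsym : Pᵀ = P := by
    have := hP.isHermitian
    simpa [Matrix.IsHermitian, Matrix.conjTranspose_eq_transpose_of_trivial] using this
  have hQsym : Qᵀ = Q := by
    have := hQ.isHermitian
    simpa [Matrix.IsHermitian, Matrix.conjTranspose_eq_transpose_of_trivial] using this
  have hΛisym : ((R + Bᵀ * P * B)⁻¹)ᵀ = (R + Bᵀ * P * B)⁻¹ := by
    have := (lam_posdef B R hR hP).inv.isHermitian
    simpa [Matrix.IsHermitian, Matrix.conjTranspose_eq_transpose_of_trivial] using this
  refine Matrix.PosSemidef.of_dotProduct_mulVec_nonneg ?_ ?_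
  · show _ᴴ = _
    rw [Matrix.conjTranspose_eq_transpose_of_trivial]
    rw [Matrix.transpose_sub, Matrix.transpose_add]
    simp only [Matrix.transpose_mul, Matrix.transpose_transpose, hPsym, hΛisym, hQsym]
    simp only [Matrix.mul_assoc]
  · intro y
    obtain ⟨u, hu⟩ := ric_cost_eq A B Q R hR hP y
    have n1 := psd_quad_nonneg hQ y
    have n2 := psd_quad_nonneg hR.posSemidef u
    have n3 := psd_quad_nonneg hP (A *ᵥ y + B *ᵥ u)
    simpa [hu] using add_nonneg (add_nonneg n1 n2) n3

lemma cond1_quad {P : Matrix (Fin n) (Fin n) ℝ} (hPsym : Pᵀ = P)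
    (hC : (Matrix.fromBlocks (Aᵀ * P * A - P + Q) (Aᵀ * P * B)
      (Bᵀ * P * A) (R + Bᵀ * P * B)).PosSemidef)
    (x : Fin n → ℝ) (u : Fin m → ℝ) :
    x ⬝ᵥ (P *ᵥ x) ≤ x ⬝ᵥ (Q *ᵥ x) + u ⬝ᵥ (R *ᵥ u)
      + (A *ᵥ x + B *ᵥ u) ⬝ᵥ (P *ᵥ (A *ᵥ x + B *ᵥ u)) := by
  have h0 := hC.dotProduct_mulVec_nonneg (Sum.elim x u)
  rw [Matrix.fromBlocks_mulVec] at h0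
  simp only [star_trivial, Sum.elim_comp_inl, Sum.elim_comp_inr,
    sumElim_dotProduct_sumElim, Matrix.add_mulVec, Matrix.sub_mulVec,
    dotProduct_add, dotProduct_sub] at h0
  have hx : x ⬝ᵥ ((Aᵀ * P * B) *ᵥ u) = u ⬝ᵥ ((Bᵀ * P * A) *ᵥ x) := by
    have ht : (Aᵀ * P * B)ᵀ = Bᵀ * P * A := by
      simp [Matrix.transpose_mul, hPsym, Matrix.mul_assoc]
    rw [dot_swap, ht, dotProduct_comm]
  rw [quad_expand A B hPsym x u]
  rw [hx] at h0
  linarith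
end ric


section pseqlem
variable {n m M : ℕ} (S : SwitchedLQR n m M) (Pund : Matrix (Fin n) (Fin n) ℝ)

lemma ric_def (i : Fin M) (P : Matrix (Fin n) (Fin n) ℝ) :
    S.Ric i P = S.Q i + (S.A i)ᵀ * P * S.A i -
      (S.A i)ᵀ * P * S.B i * (S.R i + (S.B i)ᵀ * P * S.B i)⁻¹ * ((S.B i)ᵀ * P * S.A i) := rfl

lemma pseq_cons (i : Fin M) (l : List (Fin M)) (P : Matrix (Fin n) (Fin n) ℝ) :
    S.Pseq P (i :: l) = S.Ric i (S.Pseq P l) := rfl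

lemma pseq_psd (hQ : ∀ i : Fin M, (S.Q i).PosDef) (hR : ∀ i : Fin M, (S.R i).PosDef)
    (l : List (Fin M)) : ∀ {P : Matrix (Fin n) (Fin n) ℝ}, P.PosSemidef →
      (S.Pseq P l).PosSemidef := by
  induction l with
  | nil => intro P hP; exact hP
  | cons a l ih =>
      intro P hP
      rw [pseq_cons, ric_def]
      exact ric_psd _ _ _ _ (hQ a).posSemidef (hR a) (ih hP)

lemma pseq_mono (hQ : ∀ i : Fin M, (S.Q i).PosDef) (hR : ∀ i : Fin M, (S.R i).PosDef)
    (l : List (Fin M)) :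
    ∀ {P P' : Matrix (Fin n) (Fin n) ℝ}, P.PosSemidef → P'.PosSemidef →
      (∀ y, y ⬝ᵥ (P *ᵥ y) ≤ y ⬝ᵥ (P' *ᵥ y)) →
      ∀ x : Fin n → ℝ, x ⬝ᵥ (S.Pseq P l *ᵥ x) ≤ x ⬝ᵥ (S.Pseq P' l *ᵥ x) := by
  induction l with
  | nil => intro P P' _ _ hle x; exact hle x
  | cons a l ih =>
      intro P P' hP hP' hle x
      rw [pseq_cons, pseq_cons, ric_def, ric_def]
      exact ric_mono _ _ _ _ (hR a) (pseq_psd S hQ hR l hP) (pseq_psd S hQ hR l hP')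
        (ih hP hP' hle) x

lemma pseq_ge_base (hQ : ∀ i : Fin M, (S.Q i).PosDef) (hR : ∀ i : Fin M, (S.R i).PosDef)
    (hPund : Pund.PosSemidef) (hC : S.Cond1 Pund) (l : List (Fin M)) :
    ∀ x : Fin n → ℝ, x ⬝ᵥ (Pund *ᵥ x) ≤ x ⬝ᵥ (S.Pseq Pund l *ᵥ x) := by
  have hPsym : Pundᵀ = Pund := by
    have := hPund.isHermitian
    simpa [Matrix.IsHermitian, Matrix.conjTranspose_eq_transpose_of_trivial] using this
  induction l with
  | nil => intro x; exact le_of_eq rfl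
  | cons a l ih =>
      intro x
      have step : x ⬝ᵥ (Pund *ᵥ x) ≤ x ⬝ᵥ (S.Ric a Pund *ᵥ x) := by
        rw [ric_def]
        obtain ⟨u, hu⟩ := ric_cost_eq (S.A a) (S.B a) (S.Q a) (S.R a) (hR a) hPund x
        have hcq := cond1_quad (S.A a) (S.B a) (S.Q a) (S.R a) hPsym (hC a) x u
        linarith
      have mono : x ⬝ᵥ (S.Ric a Pund *ᵥ x) ≤ x ⬝ᵥ (S.Ric a (S.Pseq Pund l) *ᵥ x) := by
        rw [ric_def, ric_def]
        exact ric_mono _ _ _ _ (hR a) hPund (pseq_psd S hQ hR l hPund) ih x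
      rw [pseq_cons]
      linarith

end pseqlem

/-- Proposition 3, first part: under Condition 1, for every `x`
and `d`, the minimum `V*_d(x)` over length-`d` mode sequences exists (attained by
some `𝐢^{d,*}`), and `V*_d(x) ≤ xᵀP_𝐢x` for every sequence `𝐢` of length `d̄ ≥ d`;
in particular `V*_d(x) ≤ V*_{d̄}(x)` for `d̄ ≥ d`. -/
theorem stmt7 {n m M : ℕ} (hn : 0 < n) (hm : 0 < m) (hM : 0 < M)
    (S : SwitchedLQR n m M)
    (hQ : ∀ i : Fin M, (S.Q i).PosDef) (hR : ∀ i : Fin M, (S.R i).PosDef)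
    (Pund : Matrix (Fin n) (Fin n) ℝ) (hPund : Pund.PosSemidef)
    (hC : S.Cond1 Pund) (x : Fin n → ℝ) (d : ℕ) :
    (∃ s : List (Fin M), s.length = d ∧
      S.Vd Pund d x = x ⬝ᵥ ((S.Pseq Pund s) *ᵥ x)) ∧
    (∀ (dbar : ℕ), d ≤ dbar → ∀ l : List (Fin M), l.length = dbar →
      S.Vd Pund d x ≤ x ⬝ᵥ ((S.Pseq Pund l) *ᵥ x)) ∧
    (∀ dbar : ℕ, d ≤ dbar → S.Vd Pund d x ≤ S.Vd Pund dbar x) := by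
  classical
  have key : ∀ e : ℕ,
      (∃ s : List (Fin M), s.length = e ∧
        S.Vd Pund e x = x ⬝ᵥ ((S.Pseq Pund s) *ᵥ x)) ∧
      (∀ l : List (Fin M), l.length = e →
        S.Vd Pund e x ≤ x ⬝ᵥ ((S.Pseq Pund l) *ᵥ x)) := by
    intro e
    have hset : {r : ℝ | ∃ l : List (Fin M), l.length = e ∧ r = x ⬝ᵥ ((S.Pseq Pund l) *ᵥ x)}
        = (fun l : List (Fin M) => x ⬝ᵥ ((S.Pseq Pund l) *ᵥ x)) '' {l | l.length = e} := by
      ext r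
      constructor
      · rintro ⟨l, hl, rfl⟩; exact ⟨l, hl, rfl⟩
      · rintro ⟨l, hl, rfl⟩; exact ⟨l, hl, rfl⟩
    have hfin : {r : ℝ | ∃ l : List (Fin M), l.length = e ∧
        r = x ⬝ᵥ ((S.Pseq Pund l) *ᵥ x)}.Finite := by
      rw [hset]; exact (List.finite_length_eq (Fin M) e).image _
    have hne : {r : ℝ | ∃ l : List (Fin M), l.length = e ∧
        r = x ⬝ᵥ ((S.Pseq Pund l) *ᵥ x)}.Nonempty :=
      ⟨_, List.replicate e ⟨0, hM⟩, by simp, rfl⟩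
    constructor
    · obtain ⟨l0, hl0, hv⟩ := hne.csInf_mem hfin
      exact ⟨l0, hl0, hv⟩
    · intro l hl
      exact csInf_le hfin.bddBelow ⟨l, hl, rfl⟩
  have part2 : ∀ (dbar : ℕ), d ≤ dbar → ∀ l : List (Fin M), l.length = dbar →
      S.Vd Pund d x ≤ x ⬝ᵥ ((S.Pseq Pund l) *ᵥ x) := by
    intro dbar hdb l hl
    have h1 : S.Vd Pund d x ≤ x ⬝ᵥ ((S.Pseq Pund (l.take d)) *ᵥ x) :=
      (key d).2 _ (by rw [List.length_take, hl, min_eq_left hdb])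
    have hsplit : S.Pseq Pund l = S.Pseq (S.Pseq Pund (l.drop d)) (l.take d) := by
      conv_lhs => rw [← List.take_append_drop d l]
      simp only [SwitchedLQR.Pseq, List.foldr_append]
    have h2 : x ⬝ᵥ ((S.Pseq Pund (l.take d)) *ᵥ x) ≤ x ⬝ᵥ ((S.Pseq Pund l) *ᵥ x) := by
      rw [hsplit]
      exact pseq_mono S hQ hR (l.take d) hPund
        (pseq_psd S hQ hR (l.drop d) hPund)
        (pseq_ge_base S Pund hQ hR hPund hC (l.drop d)) x
    linarith
  refine ⟨(key d).1, part2, ?_⟩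
  intro dbar hdb
  obtain ⟨s2, hs2, hv2⟩ := (key dbar).1
  rw [hv2]
  exact part2 dbar hdb s2 hs2
end

section
/- (One-step geometric decrease of finite-horizon values, eq. (21) of Theorem 1's proof.) Under Condition 1 and Assumption SA1, let α ∈ (0,1) satisfy αP̄ ⪯ Q_i for all i ∈ 𝕄. Then for every d ≥ 1, every x ∈ ℝⁿ and every (u,i) ∈ H*_d(x), V*_{d−1}(A_ix + B_iu) ≤ (1−α)·V*_d(x). -/
open Matrix Filter
open scoped ENNReal

section AuxHelpers
set_option linter.unusedSectionVars false
section Helpers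
variable {a b : Type*} [Fintype a] [Fintype b]

lemma myStar (x : a → ℝ) : star x = x := by simp

lemma psdQuad {P : Matrix a a ℝ} (hP : P.PosSemidef) (x : a → ℝ) :
    0 ≤ x ⬝ᵥ (P *ᵥ x) := by simpa using hP.dotProduct_mulVec_nonneg x

lemma realCT (A : Matrix a b ℝ) : Aᴴ = Aᵀ := by
  ext i j; simp [Matrix.conjTranspose_apply]

lemma dp1 (A : Matrix a b ℝ) (x : b → ℝ) (z : a → ℝ) :
    (A *ᵥ x) ⬝ᵥ z = x ⬝ᵥ (Aᵀ *ᵥ z) := by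
  rw [Matrix.mulVec_transpose, dotProduct_comm]
  rw [Matrix.dotProduct_mulVec, dotProduct_comm]

lemma blockEval {M11 : Matrix a a ℝ} {M12 : Matrix a b ℝ} {M21 : Matrix b a ℝ}
    {M22 : Matrix b b ℝ} (h : (Matrix.fromBlocks M11 M12 M21 M22).PosSemidef)
    (x : a → ℝ) (u : b → ℝ) :
    0 ≤ x ⬝ᵥ (M11 *ᵥ x) + x ⬝ᵥ (M12 *ᵥ u) + u ⬝ᵥ (M21 *ᵥ x) + u ⬝ᵥ (M22 *ᵥ u) := by
  have := h.dotProduct_mulVec_nonneg (Sum.elim x u)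
  simpa [Matrix.fromBlocks_mulVec, sumElim_dotProduct_sumElim, dotProduct_add,
    add_assoc] using this

lemma quadExpand {c : Type*} [Fintype c] (A : Matrix a b ℝ) (B : Matrix a c ℝ)
    (P : Matrix a a ℝ) (x : b → ℝ) (u : c → ℝ) :
    (A *ᵥ x + B *ᵥ u) ⬝ᵥ (P *ᵥ (A *ᵥ x + B *ᵥ u)) =
      x ⬝ᵥ ((Aᵀ * P * A) *ᵥ x) + x ⬝ᵥ ((Aᵀ * P * B) *ᵥ u) +
      u ⬝ᵥ ((Bᵀ * P * A) *ᵥ x) + u ⬝ᵥ ((Bᵀ * P * B) *ᵥ u) := by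
  simp [Matrix.mulVec_add, dotProduct_add, add_dotProduct, dp1, Matrix.mulVec_mulVec,
    Matrix.mul_assoc]
  ring

end Helpers

section H3
set_option linter.unusedSectionVars false
variable {a b : Type*} [Fintype a] [Fintype b] [DecidableEq a] [DecidableEq b]

lemma realCT' (A : Matrix a b ℝ) : Aᴴ = Aᵀ := by
  ext i j; simp [Matrix.conjTranspose_apply]

lemma symmOfPsd {P : Matrix a a ℝ} (hP : P.PosSemidef) : Pᵀ = P := by
  rw [← realCT']; exact hP.1

lemma Kpd {R : Matrix b b ℝ} {P : Matrix a a ℝ} (hR : R.PosDef) (hP : P.PosSemidef)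
    (B : Matrix a b ℝ) : (R + Bᵀ * P * B).PosDef := by
  have h := hP.conjTranspose_mul_mul_same B
  rw [realCT'] at h
  exact hR.add_posSemidef h

lemma C1block {A : Matrix a a ℝ} {B : Matrix a b ℝ} {P : Matrix a a ℝ} {R : Matrix b b ℝ}
    (hP : P.PosSemidef) (hR : R.PosDef) :
    (Matrix.fromBlocks (Aᵀ * P * B * (R + Bᵀ * P * B)⁻¹ * (Bᵀ * P * A)) (Aᵀ * P * B)
      (Bᵀ * P * A) (R + Bᵀ * P * B)).PosSemidef := by
  have hK : (R + Bᵀ * P * B).PosDef := Kpd hR hP B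
  haveI := hK.isUnit.invertible
  have hct : (Aᵀ * P * B)ᴴ = Bᵀ * P * A := by
    rw [realCT', Matrix.transpose_mul, Matrix.transpose_mul, Matrix.transpose_transpose,
      symmOfPsd hP, Matrix.mul_assoc]
  rw [← hct, Matrix.PosDef.fromBlocks₂₂ _ _ hK]
  have : Aᵀ * P * B * (R + Bᵀ * P * B)⁻¹ * (Aᵀ * P * B)ᴴ -
      Aᵀ * P * B * (R + Bᵀ * P * B)⁻¹ * (Aᵀ * P * B)ᴴ = 0 := sub_self _
  rw [this]
  exact Matrix.PosSemidef.zero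

lemma diagBlockPSD {Q : Matrix a a ℝ} {R : Matrix b b ℝ} (hQ : Q.PosSemidef)
    (hR : R.PosSemidef) : (Matrix.fromBlocks Q 0 0 R).PosSemidef := by
  refine Matrix.PosSemidef.of_dotProduct_mulVec_nonneg ?_ ?_
  · exact Matrix.IsHermitian.fromBlocks hQ.1 (by simp) hR.1
  · intro z
    rw [← Sum.elim_comp_inl_inr z]
    simp only [Matrix.fromBlocks_mulVec, star_trivial, sumElim_dotProduct_sumElim,
      Matrix.zero_mulVec, add_zero, zero_add, Sum.elim_comp_inl, Sum.elim_comp_inr]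
    have := hQ.dotProduct_mulVec_nonneg (z ∘ Sum.inl)
    have := hR.dotProduct_mulVec_nonneg (z ∘ Sum.inr)
    simp only [star_trivial] at *
    linarith

lemma bigBlockPSD {A : Matrix a a ℝ} {B : Matrix a b ℝ} {P Q : Matrix a a ℝ}
    {R : Matrix b b ℝ} (hP : P.PosSemidef) (hQ : Q.PosSemidef) (hR : R.PosSemidef) :
    (Matrix.fromBlocks (Q + Aᵀ * P * A) (Aᵀ * P * B) (Bᵀ * P * A)
      (R + Bᵀ * P * B)).PosSemidef := by
  have h1 : (Matrix.fromBlocks Q 0 0 R).PosSemidef := diagBlockPSD hQ hR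
  have h2 := hP.conjTranspose_mul_mul_same (Matrix.fromCols A B)
  rw [Matrix.conjTranspose_fromCols_eq_fromRows_conjTranspose, Matrix.fromRows_mul,
    Matrix.fromRows_mul_fromCols, realCT', realCT'] at h2
  have h3 := h1.add h2
  rw [Matrix.fromBlocks_add] at h3
  simpa [Matrix.mul_assoc] using h3
end H3

namespace SwitchedLQR
variable {n m M : ℕ}

/-- one-step Riccati inequality: `xᵀ𝓡ᵢ(P)x ≤ ℓ(x,u,i) + yᵀPy`. -/
lemma ricStep (S : SwitchedLQR n m M) (hR : ∀ i, (S.R i).PosDef)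
    {P : Matrix (Fin n) (Fin n) ℝ} (hP : P.PosSemidef) (i : Fin M)
    (x : Fin n → ℝ) (u : Fin m → ℝ) :
    x ⬝ᵥ (S.Ric i P *ᵥ x) ≤
      S.ell x u i + (S.A i *ᵥ x + S.B i *ᵥ u) ⬝ᵥ (P *ᵥ (S.A i *ᵥ x + S.B i *ᵥ u)) := by
  classical
  set A := S.A i; set B := S.B i; set Q := S.Q i; set R := S.R i
  have hb := blockEval (C1block (A := A) (B := B) hP (hR i)) x u
  have hexp := quadExpand A B P x u
  have hric : x ⬝ᵥ (S.Ric i P *ᵥ x) =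
      x ⬝ᵥ (Q *ᵥ x) + x ⬝ᵥ ((Aᵀ * P * A) *ᵥ x) -
        x ⬝ᵥ ((Aᵀ * P * B * (R + Bᵀ * P * B)⁻¹ * (Bᵀ * P * A)) *ᵥ x) := by
    simp [SwitchedLQR.Ric, Matrix.sub_mulVec, Matrix.add_mulVec, dotProduct_add, dotProduct_sub]
    rfl
  have hK : u ⬝ᵥ ((R + Bᵀ * P * B) *ᵥ u) = u ⬝ᵥ (R *ᵥ u) + u ⬝ᵥ ((Bᵀ * P * B) *ᵥ u) := by
    simp [Matrix.add_mulVec, dotProduct_add]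
  rw [hric, hexp]
  simp only [SwitchedLQR.ell]
  rw [hK] at hb
  linarith

/-- the Riccati operator preserves positive semi-definiteness. -/
lemma ricPSD (S : SwitchedLQR n m M) (hQ : ∀ i, (S.Q i).PosDef) (hR : ∀ i, (S.R i).PosDef)
    {P : Matrix (Fin n) (Fin n) ℝ} (hP : P.PosSemidef) (i : Fin M) :
    (S.Ric i P).PosSemidef := by
  classical
  set A := S.A i; set B := S.B i; set Q := S.Q i; set R := S.R i
  have hK : (R + Bᵀ * P * B).PosDef := Kpd (hR i) hP B
  haveI := hK.isUnit.invertible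
  have hct : (Aᵀ * P * B)ᴴ = Bᵀ * P * A := by
    rw [realCT', Matrix.transpose_mul, Matrix.transpose_mul, Matrix.transpose_transpose,
      symmOfPsd hP, Matrix.mul_assoc]
  have hbig := bigBlockPSD (A := A) (B := B) hP (hQ i).posSemidef (hR i).posSemidef
  rw [← hct, Matrix.PosDef.fromBlocks₂₂ _ _ hK] at hbig
  have : S.Ric i P = Q + Aᵀ * P * A - Aᵀ * P * B * (R + Bᵀ * P * B)⁻¹ * (Aᵀ * P * B)ᴴ := by
    rw [hct]; rfl
  rw [this]
  exact hbig

lemma pseqPSD (S : SwitchedLQR n m M) (hQ : ∀ i, (S.Q i).PosDef) (hR : ∀ i, (S.R i).PosDef)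
    {Pund : Matrix (Fin n) (Fin n) ℝ} (hPund : Pund.PosSemidef) (l : List (Fin M)) :
    (S.Pseq Pund l).PosSemidef := by
  induction l with
  | nil => exact hPund
  | cons i t ih => exact S.ricPSD hQ hR ih i

end SwitchedLQR
end AuxHelpers


section VdLemmas
set_option linter.unusedSectionVars false
namespace SwitchedLQR
variable {n m M : ℕ}

lemma vd_set_eq (S : SwitchedLQR n m M) (Pund : Matrix (Fin n) (Fin n) ℝ) (d : ℕ)
    (x : Fin n → ℝ) :
    {r : ℝ | ∃ l : List (Fin M), l.length = d ∧ r = x ⬝ᵥ ((S.Pseq Pund l) *ᵥ x)} =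
      (fun l : List (Fin M) => x ⬝ᵥ ((S.Pseq Pund l) *ᵥ x)) '' {l | l.length = d} := by
  ext r
  simp only [Set.mem_setOf_eq, Set.mem_image]
  constructor
  · rintro ⟨l, hl, rfl⟩; exact ⟨l, hl, rfl⟩
  · rintro ⟨l, hl, rfl⟩; exact ⟨l, hl, rfl⟩

lemma vd_finite (S : SwitchedLQR n m M) (Pund : Matrix (Fin n) (Fin n) ℝ) (d : ℕ)
    (x : Fin n → ℝ) :
    {r : ℝ | ∃ l : List (Fin M), l.length = d ∧ r = x ⬝ᵥ ((S.Pseq Pund l) *ᵥ x)}.Finite := by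
  rw [S.vd_set_eq]
  exact (List.finite_length_eq (Fin M) d).image _

lemma vd_nonempty (hM : 0 < M) (S : SwitchedLQR n m M) (Pund : Matrix (Fin n) (Fin n) ℝ)
    (d : ℕ) (x : Fin n → ℝ) :
    {r : ℝ | ∃ l : List (Fin M), l.length = d ∧ r = x ⬝ᵥ ((S.Pseq Pund l) *ᵥ x)}.Nonempty :=
  ⟨_, List.replicate d ⟨0, hM⟩, List.length_replicate, rfl⟩

lemma vd_le (hM : 0 < M) (S : SwitchedLQR n m M) (Pund : Matrix (Fin n) (Fin n) ℝ) (d : ℕ)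
    (x : Fin n → ℝ) (l : List (Fin M)) (hl : l.length = d) :
    S.Vd Pund d x ≤ x ⬝ᵥ ((S.Pseq Pund l) *ᵥ x) :=
  csInf_le (S.vd_finite Pund d x).bddBelow ⟨l, hl, rfl⟩

lemma vd_exists (hM : 0 < M) (S : SwitchedLQR n m M) (Pund : Matrix (Fin n) (Fin n) ℝ)
    (d : ℕ) (x : Fin n → ℝ) :
    ∃ l : List (Fin M), l.length = d ∧ S.Vd Pund d x = x ⬝ᵥ ((S.Pseq Pund l) *ᵥ x) :=
  (S.vd_nonempty hM Pund d x).csInf_mem (S.vd_finite Pund d x)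

lemma vd_zero (S : SwitchedLQR n m M) (Pund : Matrix (Fin n) (Fin n) ℝ) (x : Fin n → ℝ) :
    S.Vd Pund 0 x = x ⬝ᵥ (Pund *ᵥ x) := by
  have : {r : ℝ | ∃ l : List (Fin M), l.length = 0 ∧ r = x ⬝ᵥ ((S.Pseq Pund l) *ᵥ x)} =
      {x ⬝ᵥ (Pund *ᵥ x)} := by
    ext r
    simp only [Set.mem_setOf_eq, Set.mem_singleton_iff, List.length_eq_zero_iff]
    constructor
    · rintro ⟨l, rfl, rfl⟩; rfl
    · rintro rfl; exact ⟨[], rfl, rfl⟩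
  rw [SwitchedLQR.Vd, this, csInf_singleton]

/-- `V_{d+1}(x) ≤ ℓ(x,u,i) + V_d(A_i x + B_i u)`. -/
lemma vd_step (hM : 0 < M) (S : SwitchedLQR n m M) (hQ : ∀ i, (S.Q i).PosDef)
    (hR : ∀ i, (S.R i).PosDef) {Pund : Matrix (Fin n) (Fin n) ℝ} (hPund : Pund.PosSemidef)
    (d : ℕ) (x : Fin n → ℝ) (u : Fin m → ℝ) (i : Fin M) :
    S.Vd Pund (d + 1) x ≤ S.ell x u i + S.Vd Pund d (S.A i *ᵥ x + S.B i *ᵥ u) := by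
  obtain ⟨l, hl, heq⟩ := S.vd_exists hM Pund d (S.A i *ᵥ x + S.B i *ᵥ u)
  have h1 : S.Vd Pund (d + 1) x ≤ x ⬝ᵥ ((S.Pseq Pund (i :: l)) *ᵥ x) :=
    S.vd_le hM Pund (d + 1) x (i :: l) (by simp [hl])
  have h2 : S.Pseq Pund (i :: l) = S.Ric i (S.Pseq Pund l) := rfl
  rw [h2] at h1
  calc S.Vd Pund (d + 1) x ≤ x ⬝ᵥ (S.Ric i (S.Pseq Pund l) *ᵥ x) := h1
    _ ≤ S.ell x u i + (S.A i *ᵥ x + S.B i *ᵥ u) ⬝ᵥ ((S.Pseq Pund l) *ᵥ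
        (S.A i *ᵥ x + S.B i *ᵥ u)) := S.ricStep hR (S.pseqPSD hQ hR hPund l) i x u
    _ = S.ell x u i + S.Vd Pund d (S.A i *ᵥ x + S.B i *ᵥ u) := by rw [heq]

lemma phi_shift (S : SwitchedLQR n m M) (x : Fin n → ℝ) (u : ℕ → Fin m → ℝ)
    (is : ℕ → Fin M) (k : ℕ) :
    S.phi x u is (k + 1) =
      S.phi (S.A (is 0) *ᵥ x + S.B (is 0) *ᵥ u 0)
        (fun j => u (j + 1)) (fun j => is (j + 1)) k := by
  induction k with
  | zero => rfl
  | succ k ih =>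
    have h : S.phi x u is (k + 1 + 1) =
        S.A (is (k + 1)) *ᵥ S.phi x u is (k + 1) + S.B (is (k + 1)) *ᵥ u (k + 1) := rfl
    rw [h, ih]
    rfl

lemma jd_succ (S : SwitchedLQR n m M) (Pund : Matrix (Fin n) (Fin n) ℝ) (d : ℕ)
    (x : Fin n → ℝ) (u : ℕ → Fin m → ℝ) (is : ℕ → Fin M) :
    S.Jd Pund (d + 1) x u is =
      S.ell x (u 0) (is 0) +
        S.Jd Pund d (S.A (is 0) *ᵥ x + S.B (is 0) *ᵥ u 0)
          (fun j => u (j + 1)) (fun j => is (j + 1)) := by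
  unfold SwitchedLQR.Jd
  rw [Finset.sum_range_succ']
  have hphi0 : S.phi x u is 0 = x := rfl
  have hsum : ∀ k, S.phi x u is (k + 1) =
      S.phi (S.A (is 0) *ᵥ x + S.B (is 0) *ᵥ u 0)
        (fun j => u (j + 1)) (fun j => is (j + 1)) k := S.phi_shift x u is
  rw [hphi0]
  simp only [hsum]
  ring

/-- `V_d(x) ≤ J_d(x,u,i)` for any inputs. -/
lemma vd_le_jd (hM : 0 < M) (S : SwitchedLQR n m M) (hQ : ∀ i, (S.Q i).PosDef)
    (hR : ∀ i, (S.R i).PosDef) {Pund : Matrix (Fin n) (Fin n) ℝ} (hPund : Pund.PosSemidef)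
    (d : ℕ) : ∀ (x : Fin n → ℝ) (u : ℕ → Fin m → ℝ) (is : ℕ → Fin M),
    S.Vd Pund d x ≤ S.Jd Pund d x u is := by
  induction d with
  | zero =>
    intro x u is
    rw [S.vd_zero]
    simp [SwitchedLQR.Jd, SwitchedLQR.phi]
  | succ d ih =>
    intro x u is
    rw [S.jd_succ]
    calc S.Vd Pund (d + 1) x
        ≤ S.ell x (u 0) (is 0) + S.Vd Pund d (S.A (is 0) *ᵥ x + S.B (is 0) *ᵥ u 0) :=
          S.vd_step hM hQ hR hPund d x (u 0) (is 0)
      _ ≤ _ := by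
          have := ih (S.A (is 0) *ᵥ x + S.B (is 0) *ᵥ u 0)
            (fun j => u (j + 1)) (fun j => is (j + 1))
          linarith

/-- Condition 1 gives `xᵀP̲x ≤ ℓ(x,u,i) + yᵀP̲y`. -/
lemma cond1_step (S : SwitchedLQR n m M) {Pund : Matrix (Fin n) (Fin n) ℝ}
    (hC : S.Cond1 Pund) (i : Fin M) (x : Fin n → ℝ) (u : Fin m → ℝ) :
    x ⬝ᵥ (Pund *ᵥ x) ≤
      S.ell x u i + (S.A i *ᵥ x + S.B i *ᵥ u) ⬝ᵥ (Pund *ᵥ (S.A i *ᵥ x + S.B i *ᵥ u)) := by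
  have hb := blockEval (hC i) x u
  have hexp := quadExpand (S.A i) (S.B i) Pund x u
  have h11 : x ⬝ᵥ (((S.A i)ᵀ * Pund * S.A i - Pund + S.Q i) *ᵥ x) =
      x ⬝ᵥ (((S.A i)ᵀ * Pund * S.A i) *ᵥ x) - x ⬝ᵥ (Pund *ᵥ x) + x ⬝ᵥ (S.Q i *ᵥ x) := by
    simp [Matrix.sub_mulVec, Matrix.add_mulVec, dotProduct_add, dotProduct_sub]
  have hK : u ⬝ᵥ ((S.R i + (S.B i)ᵀ * Pund * S.B i) *ᵥ u) =
      u ⬝ᵥ (S.R i *ᵥ u) + u ⬝ᵥ (((S.B i)ᵀ * Pund * S.B i) *ᵥ u) := by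
    simp [Matrix.add_mulVec, dotProduct_add]
  rw [h11, hK] at hb
  rw [hexp]
  simp only [SwitchedLQR.ell]
  linarith

lemma jd_mono (S : SwitchedLQR n m M) {Pund : Matrix (Fin n) (Fin n) ℝ}
    (hC : S.Cond1 Pund) (x : Fin n → ℝ) (u : ℕ → Fin m → ℝ) (is : ℕ → Fin M)
    {d N : ℕ} (hdN : d ≤ N) : S.Jd Pund d x u is ≤ S.Jd Pund N x u is := by
  induction N, hdN using Nat.le_induction with
  | base => exact le_refl _
  | succ N hdN ih =>
    refine le_trans ih ?_
    unfold SwitchedLQR.Jd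
    rw [Finset.sum_range_succ]
    have hstep := S.cond1_step hC (is N) (S.phi x u is N) (u N)
    have hφ : S.phi x u is (N + 1) = S.A (is N) *ᵥ (S.phi x u is N) + S.B (is N) *ᵥ u N := rfl
    rw [hφ]
    linarith

end SwitchedLQR
end VdLemmas


section LimitLemmas
set_option linter.unusedSectionVars false
namespace SwitchedLQR
variable {n m M : ℕ}

lemma quad_continuous (P : Matrix (Fin n) (Fin n) ℝ) :
    Continuous (fun y : Fin n → ℝ => y ⬝ᵥ (P *ᵥ y)) := by
  simp only [Matrix.mulVec, dotProduct]
  fun_prop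

/-- Under Condition 1 and SA1, `V_d(x) ≤ xᵀP̄x`. -/
lemma vd_le_pbar (hM : 0 < M) (S : SwitchedLQR n m M)
    (hQ : ∀ i, (S.Q i).PosDef) (hR : ∀ i, (S.R i).PosDef)
    {Pund : Matrix (Fin n) (Fin n) ℝ} (hPund : Pund.PosSemidef) (hC : S.Cond1 Pund)
    {Pbar : Matrix (Fin n) (Fin n) ℝ} (hSA : S.SA1 Pbar)
    {α : ℝ} (hα0 : 0 < α) (hαQ : ∀ i : Fin M, (S.Q i - α • Pbar).PosSemidef)
    (d : ℕ) (x : Fin n → ℝ) : S.Vd Pund d x ≤ x ⬝ᵥ (Pbar *ᵥ x) := by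
  classical
  obtain ⟨hPbarPD, hopt⟩ := hSA
  obtain ⟨u, is, hJeq, hVle⟩ := hopt x
  have hJle : S.Jinf x u is ≤ ENNReal.ofReal (x ⬝ᵥ (Pbar *ᵥ x)) := by
    rw [hJeq]; exact hVle
  have hfin : S.Jinf x u is ≠ ⊤ := ne_top_of_le_ne_top ENNReal.ofReal_ne_top hJle
  set φ : ℕ → Fin n → ℝ := fun k => S.phi x u is k with hφdef
  set ℓ : ℕ → ℝ := fun k => S.ell (φ k) (u k) (is k) with hℓdef
  have hℓ0 : ∀ k, 0 ≤ ℓ k := fun k =>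
    add_nonneg (psdQuad (hQ _).posSemidef _) (psdQuad (hR _).posSemidef _)
  have hJrepr : S.Jinf x u is = ∑' k, ENNReal.ofReal (ℓ k) := rfl
  have hsum : Summable ℓ := by
    have h := ENNReal.summable_toReal (hJrepr ▸ hfin)
    refine h.congr fun k => ?_
    exact ENNReal.toReal_ofReal (hℓ0 k)
  have htsum : ∑' k, ℓ k ≤ x ⬝ᵥ (Pbar *ᵥ x) := by
    have h1 : (S.Jinf x u is).toReal = ∑' k, ℓ k := by
      rw [hJrepr, ENNReal.tsum_toReal_eq (fun k => ENNReal.ofReal_ne_top)]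
      exact tsum_congr fun k => ENNReal.toReal_ofReal (hℓ0 k)
    have h2 := ENNReal.toReal_mono ENNReal.ofReal_ne_top hJle
    rwa [h1, ENNReal.toReal_ofReal (psdQuad hPbarPD.posSemidef x)] at h2
  have hpartial : ∀ N, ∑ k ∈ Finset.range N, ℓ k ≤ x ⬝ᵥ (Pbar *ᵥ x) := fun N =>
    le_trans (hsum.sum_le_tsum _ (fun i _ => hℓ0 i)) htsum
  -- the states tend to zero
  have hℓtend : Tendsto ℓ atTop (nhds 0) := hsum.tendsto_atTop_zero
  have hPbq : Tendsto (fun k => (φ k) ⬝ᵥ (Pbar *ᵥ φ k)) atTop (nhds 0) := by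
    have hb : ∀ k, (φ k) ⬝ᵥ (Pbar *ᵥ φ k) ≤ (1 / α) * ℓ k := by
      intro k
      have h1 := psdQuad (hαQ (is k)) (φ k)
      have h2 : (φ k) ⬝ᵥ ((S.Q (is k) - α • Pbar) *ᵥ φ k) =
          (φ k) ⬝ᵥ (S.Q (is k) *ᵥ φ k) - α * ((φ k) ⬝ᵥ (Pbar *ᵥ φ k)) := by
        rw [Matrix.sub_mulVec, dotProduct_sub, Matrix.smul_mulVec, dotProduct_smul,
          smul_eq_mul]
      have h3 : (φ k) ⬝ᵥ (S.Q (is k) *ᵥ φ k) ≤ ℓ k :=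
        le_add_of_nonneg_right (psdQuad (hR _).posSemidef _)
      rw [h2] at h1
      have h4 : α * ((φ k) ⬝ᵥ (Pbar *ᵥ φ k)) ≤ ℓ k := by linarith
      calc (φ k) ⬝ᵥ (Pbar *ᵥ φ k) = (1 / α) * (α * ((φ k) ⬝ᵥ (Pbar *ᵥ φ k))) := by
            field_simp
        _ ≤ (1 / α) * ℓ k := mul_le_mul_of_nonneg_left h4 (by positivity)
    have hg : Tendsto (fun k => (1 / α) * ℓ k) atTop (nhds 0) := by
      simpa using hℓtend.const_mul (1 / α)
    exact squeeze_zero (fun k => psdQuad hPbarPD.posSemidef _) hb hg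
  obtain ⟨C, hC2, hCpsd⟩ : ∃ C : Matrix (Fin n) (Fin n) ℝ, C * C = Pbar ∧ C.PosSemidef := by
    open scoped MatrixOrder in
    exact ⟨CFC.sqrt Pbar, CFC.sqrt_mul_sqrt_self Pbar hPbarPD.posSemidef.nonneg,
      (CFC.sqrt_nonneg Pbar).posSemidef⟩
  set g : ℕ → Fin n → ℝ := fun k => C *ᵥ φ k with hgdef
  have hgq : ∀ k, (g k) ⬝ᵥ (g k) = (φ k) ⬝ᵥ (Pbar *ᵥ φ k) := by
    intro k
    rw [hgdef]
    rw [dp1, Matrix.mulVec_mulVec, symmOfPsd hCpsd, hC2]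
  have hgsq : Tendsto (fun k => (g k) ⬝ᵥ (g k)) atTop (nhds 0) := by
    simpa only [hgq] using hPbq
  have hgcoord : ∀ j, Tendsto (fun k => g k j) atTop (nhds 0) := by
    intro j
    rw [tendsto_zero_iff_abs_tendsto_zero]
    have hsq : Tendsto (fun k => (g k j) ^ 2) atTop (nhds 0) := by
      refine squeeze_zero (fun k => sq_nonneg _) (fun k => ?_) hgsq
      have heq : (g k) ⬝ᵥ (g k) = ∑ t, g k t * g k t := rfl
      have h5 : g k j * g k j ≤ ∑ t, g k t * g k t := by
        simpa using Finset.single_le_sum (f := fun t => g k t * g k t)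
          (fun t _ => mul_self_nonneg _) (Finset.mem_univ j)
      rw [heq, pow_two]
      exact h5
    have := (Real.continuous_sqrt.tendsto' 0 0 (by simp)).comp hsq
    simpa [Function.comp_def, Real.sqrt_sq_eq_abs] using this
  have hdet : IsUnit C.det := by
    have hdd : C.det * C.det = Pbar.det := by rw [← Matrix.det_mul, hC2]
    have := hPbarPD.det_pos
    refine isUnit_iff_ne_zero.mpr fun h0 => ?_
    rw [h0, mul_zero] at hdd
    linarith [hdd ▸ this]
  have hφcoord : ∀ j, Tendsto (fun k => φ k j) atTop (nhds 0) := by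
    intro j
    have hCinv : C⁻¹ * C = 1 := Matrix.nonsing_inv_mul C hdet
    have hrep : ∀ k, φ k j = ∑ t, C⁻¹ j t * g k t := by
      intro k
      have : C⁻¹ *ᵥ (C *ᵥ φ k) = φ k := by
        rw [Matrix.mulVec_mulVec, hCinv, Matrix.one_mulVec]
      conv_lhs => rw [← this]
      rfl
    simp only [hrep]
    have := tendsto_finset_sum (Finset.univ : Finset (Fin n))
      (fun t _ => (hgcoord t).const_mul (C⁻¹ j t))
    simpa using this
  have hφtend : Tendsto φ atTop (nhds 0) := by
    rw [tendsto_pi_nhds]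
    intro j
    simpa using hφcoord j
  have hterm : Tendsto (fun N => (φ N) ⬝ᵥ (Pund *ᵥ φ N)) atTop (nhds 0) := by
    have hcont := quad_continuous (n := n) Pund
    have := (hcont.tendsto' 0 0 (by simp)).comp hφtend
    simpa [Function.comp_def] using this
  -- conclude
  have hlim : Tendsto (fun N => x ⬝ᵥ (Pbar *ᵥ x) + (φ N) ⬝ᵥ (Pund *ᵥ φ N)) atTop
      (nhds (x ⬝ᵥ (Pbar *ᵥ x))) := by
    simpa using tendsto_const_nhds.add hterm
  refine ge_of_tendsto hlim ?_
  filter_upwards [eventually_ge_atTop d] with N hN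
  calc S.Vd Pund d x ≤ S.Jd Pund d x u is := S.vd_le_jd hM hQ hR hPund d x u is
    _ ≤ S.Jd Pund N x u is := S.jd_mono hC x u is hN
    _ = (∑ k ∈ Finset.range N, ℓ k) + (φ N) ⬝ᵥ (Pund *ᵥ φ N) := rfl
    _ ≤ x ⬝ᵥ (Pbar *ᵥ x) + (φ N) ⬝ᵥ (Pund *ᵥ φ N) := by linarith [hpartial N]

end SwitchedLQR
end LimitLemmas

/-- one-step geometric decrease, eq. (21): under Condition 1 and
Assumption SA1, if `α ∈ (0,1)` satisfies `αP̄ ⪯ Qᵢ` for all modes, then for every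
`d ≥ 1`, `x` and `(u,i) ∈ H*_d(x)`, `V*_{d-1}(Aᵢx+Bᵢu) ≤ (1-α)·V*_d(x)`. -/
theorem stmt12 {n m M : ℕ} (hn : 0 < n) (hm : 0 < m) (hM : 0 < M)
    (S : SwitchedLQR n m M)
    (hQ : ∀ i : Fin M, (S.Q i).PosDef) (hR : ∀ i : Fin M, (S.R i).PosDef)
    (Pund : Matrix (Fin n) (Fin n) ℝ) (hPund : Pund.PosSemidef)
    (hC : S.Cond1 Pund)
    (Pbar : Matrix (Fin n) (Fin n) ℝ) (hSA : S.SA1 Pbar)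
    (α : ℝ) (hα0 : 0 < α) (hα1 : α < 1)
    (hαQ : ∀ i : Fin M, (S.Q i - α • Pbar).PosSemidef) :
    ∀ (d : ℕ), 1 ≤ d → ∀ (x : Fin n → ℝ) (u : Fin m → ℝ) (i : Fin M),
      (u, i) ∈ S.HStar Pund d x →
      S.Vd Pund (d - 1) (S.A i *ᵥ x + S.B i *ᵥ u) ≤ (1 - α) * S.Vd Pund d x := by
  intro d hd x u i hmem
  have hmem' : S.Vd Pund d x =
      S.ell x u i + S.Vd Pund (d - 1) (S.A i *ᵥ x + S.B i *ᵥ u) := hmem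
  have hVle : S.Vd Pund d x ≤ x ⬝ᵥ (Pbar *ᵥ x) :=
    S.vd_le_pbar hM hQ hR hPund hC hSA hα0 hαQ d x
  have hαP : α * (x ⬝ᵥ (Pbar *ᵥ x)) ≤ x ⬝ᵥ (S.Q i *ᵥ x) := by
    have h1 := psdQuad (hαQ i) x
    have h2 : x ⬝ᵥ ((S.Q i - α • Pbar) *ᵥ x) =
        x ⬝ᵥ (S.Q i *ᵥ x) - α * (x ⬝ᵥ (Pbar *ᵥ x)) := by
      rw [Matrix.sub_mulVec, dotProduct_sub, Matrix.smul_mulVec, dotProduct_smul,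
        smul_eq_mul]
    rw [h2] at h1
    linarith
  have hQell : x ⬝ᵥ (S.Q i *ᵥ x) ≤ S.ell x u i :=
    le_add_of_nonneg_right (psdQuad (hR i).posSemidef u)
  have hmul : α * S.Vd Pund d x ≤ α * (x ⬝ᵥ (Pbar *ᵥ x)) :=
    mul_le_mul_of_nonneg_left hVle hα0.le
  linarith
end
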